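/- For α > 1 and x ∈ (0, 1 - 1/α), define f(x) = x^{1/α}(1-x)/(α(1-x)-1) and Ψ(x) = (f(x) - x f'(x))/f(x)^2. Then Ψ is strictly decreasing on (0, 1 - 1/α). -/

import Mathlib

open Real Set Filter

theorem psi_strict_anti
    (α : ℝ) (hα : 1 < α)
    (f Ψ : ℝ → ℝ)
    (hf : ∀ x : ℝ, f x = x ^ (1/α) * (1 - x) / (α * (1 - x) - 1))
    (hΨ : ∀ x : ℝ, Ψ x = (f x - x * deriv f x) / (f x) ^ 2) :
    StrictAntiOn Ψ (Set.Ioo 0 (1 - 1/α)) := by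
  have hα0 : (0:ℝ) < α := lt_trans one_pos hα
  have hαne : α ≠ 0 := ne_of_gt hα0
  have hfe : f = fun y : ℝ => y ^ (1/α) * (1 - y) / (α * (1 - y) - 1) := funext hf
  subst hfe
  set s : Set ℝ := Set.Ioo 0 (1 - 1/α) with hsdef
  have hsopen : IsOpen s := isOpen_Ioo
  have hfact : ∀ y ∈ s, 0 < y ∧ y < 1 ∧ 0 < α * (1 - y) - 1 := by
    intro y hy
    obtain ⟨h0, h1⟩ := hy
    have hinv : 0 < 1/α := by positivity
    have hy1 : y < 1 := by linarith
    refine ⟨h0, hy1, ?_⟩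
    have h2 : 1/α < 1 - y := by linarith
    have h3 : (1/α) * α < (1 - y) * α := mul_lt_mul_of_pos_right h2 hα0
    rw [one_div, inv_mul_cancel₀ hαne] at h3
    nlinarith
  have hrpow : ∀ y : ℝ, 0 < y →
      HasDerivAt (fun z : ℝ => z ^ (1/α)) (1/α * y ^ (1/α) / y) y := by
    intro y hy
    have h := Real.hasDerivAt_rpow_const (x := y) (p := 1/α) (Or.inl (ne_of_gt hy))
    convert h using 1
    rw [Real.rpow_sub hy, Real.rpow_one]
    ring
  have hfd : ∀ y ∈ s, HasDerivAt (fun z : ℝ => z ^ (1/α) * (1 - z) / (α * (1 - z) - 1))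
      (((1/α * y ^ (1/α) / y * (1 - y) + y ^ (1/α) * (-1)) * (α * (1 - y) - 1)
        - (y ^ (1/α) * (1 - y)) * (α * (-1))) / (α * (1 - y) - 1) ^ 2) y := by
    intro y hy
    obtain ⟨hy0, hy1, hyD⟩ := hfact y hy
    have h1 : HasDerivAt (fun z : ℝ => (1 : ℝ) - z) (-1) y := by
      simpa using (hasDerivAt_id y).const_sub 1
    have hnum : HasDerivAt (fun z : ℝ => z ^ (1/α) * (1 - z))
        (1/α * y ^ (1/α) / y * (1 - y) + y ^ (1/α) * (-1)) y := (hrpow y hy0).mul h1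
    have hden : HasDerivAt (fun z : ℝ => α * (1 - z) - 1) (α * (-1)) y :=
      (h1.const_mul α).sub_const 1
    exact hnum.div hden (ne_of_gt hyD)
  set φ : ℝ → ℝ := fun y =>
    ((α-1)*(1-y)*(α*(1-y)-1) + α*y*(α*(1-y)-1) - α^2*y*(1-y)) / (α*(1-y)^2*y^(1/α))
    with hφdef
  have hΨφ : ∀ y ∈ s, Ψ y = φ y := by
    intro y hy
    obtain ⟨hy0, hy1, hyD⟩ := hfact y hy
    have h1y : (0:ℝ) < 1 - y := by linarith
    have hp0 : (0:ℝ) < y ^ (1/α) := Real.rpow_pos_of_pos hy0 _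
    have hpne : y ^ (1/α) ≠ 0 := ne_of_gt hp0
    have h1ne : (1:ℝ) - y ≠ 0 := ne_of_gt h1y
    have hyne : y ≠ 0 := ne_of_gt hy0
    have hDne : α * (1 - y) - 1 ≠ 0 := ne_of_gt hyD
    rw [hΨ y, (hfd y hy).deriv]
    simp only [hφdef]
    field_simp
    ring
  have key : ∀ x ∈ s, HasDerivAt Ψ
      ((-(α-1)^2*(1-x)^2 - α*x*((α-1)*(1-x^2)+2*α*x)) / (α^2*(1-x)^3*(x*x^(1/α)))) x := by
    intro x hx
    obtain ⟨hx0, hx1, hxD⟩ := hfact x hx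
    have h1x : (0:ℝ) < 1 - x := by linarith
    have hp0 : (0:ℝ) < x ^ (1/α) := Real.rpow_pos_of_pos hx0 _
    have hpne : x ^ (1/α) ≠ 0 := ne_of_gt hp0
    have h1ne : (1:ℝ) - x ≠ 0 := ne_of_gt h1x
    have hxne : x ≠ 0 := ne_of_gt hx0
    have h1 : HasDerivAt (fun z : ℝ => (1 : ℝ) - z) (-1) x := by
      simpa using (hasDerivAt_id x).const_sub 1
    have hD : HasDerivAt (fun z : ℝ => α * (1 - z) - 1) (α * (-1)) x :=
      (h1.const_mul α).sub_const 1
    have hNn : HasDerivAt (fun z : ℝ =>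
        (α-1)*(1-z)*(α*(1-z)-1) + α*z*(α*(1-z)-1) - α^2*z*(1-z))
        ( ((α-1)*(-1)*(α*(1-x)-1) + (α-1)*(1-x)*(α*(-1)))
          + (α*(α*(1-x)-1) + α*x*(α*(-1)))
          - (α^2*(1-x) + α^2*x*(-1)) ) x := by
      have t1 := (h1.const_mul (α-1)).mul hD
      have t2 := ((hasDerivAt_id x).const_mul α).mul hD
      have t3 := ((hasDerivAt_id x).const_mul (α^2)).mul h1
      refine ((t1.add t2).sub t3).congr_deriv ?_
      simp only [id]
      ring
    have hsq : HasDerivAt (fun z : ℝ => ((1:ℝ)-z)^2) (2*(1-x)*(-1)) x := by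
      refine (h1.pow 2).congr_deriv ?_
      norm_num
    have hDd2 : HasDerivAt (fun z : ℝ => α*(1-z)^2*z^(1/α))
        ((α*(2*(1-x)*(-1))) * x^(1/α) + (α*(1-x)^2) * (1/α * x^(1/α)/x)) x :=
      (hsq.const_mul α).mul (hrpow x hx0)
    have hDd2ne : α*(1-x)^2*x^(1/α) ≠ 0 :=
      ne_of_gt (mul_pos (mul_pos hα0 (pow_pos h1x 2)) hp0)
    have hφx := hNn.div hDd2 hDd2ne
    have hφd : HasDerivAt φ
        ((-(α-1)^2*(1-x)^2 - α*x*((α-1)*(1-x^2)+2*α*x)) / (α^2*(1-x)^3*(x*x^(1/α)))) x := by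
      rw [hφdef]
      refine hφx.congr_deriv ?_
      field_simp
      ring
    refine hφd.congr_of_eventuallyEq ?_
    filter_upwards [hsopen.mem_nhds hx] with y hy using hΨφ y hy
  have hconv : Convex ℝ s := convex_Ioo _ _
  apply strictAntiOn_of_deriv_neg hconv
  · intro x hx
    exact ((key x hx).differentiableAt).continuousAt.continuousWithinAt
  · intro x hx
    rw [interior_Ioo] at hx
    rw [(key x hx).deriv]
    obtain ⟨hx0, hx1, hxD⟩ := hfact x hx
    have h1x : (0:ℝ) < 1 - x := by linarith
    have hp0 : (0:ℝ) < x ^ (1/α) := Real.rpow_pos_of_pos hx0 _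
    apply div_neg_of_neg_of_pos
    · have hA : 0 < (α-1)^2*(1-x)^2 :=
        mul_pos (pow_pos (by linarith) 2) (pow_pos h1x 2)
      have hB : 0 < α*x*((α-1)*(1-x^2)+2*α*x) := by
        apply mul_pos (mul_pos hα0 hx0)
        nlinarith
      linarith
    · exact mul_pos (mul_pos (pow_pos hα0 2) (pow_pos h1x 3)) (mul_pos hx0 hp0)
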